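/- Let u_h : M_h → ℝ be a discrete function (h = 1/n) whose discrete Hessian H_h u_h(x) is positive semidefinite at every interior mesh point, and suppose |u_h(x)| ≤ M₀ for all x ∈ M_h, for some M₀ > 0. Then: (a) along every coordinate line, u_h satisfies the one-dimensional discrete convexity inequalities, i.e. (u_h(x + k h e_i) − u_h(x + (k−1) h e_i))/h ≤ (u_h(x + (k+1) h e_i) − u_h(x + k h e_i))/h whenever the three points lie in M_h and the middle point is interior; and (b) for every ε > 0 there exists a constant C depending only on M₀ and ε (not on u_h or h) such that |D_{h,i}u_h(x)| ≤ C for all i and all mesh points x ∈ M_h with dist(x, ∂Q) > ε where the difference is defined. -/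

import Mathlib

open Set Filter Metric
open scoped Classical

namespace Stmt18

variable (d : ℕ)

/-- The cube `Q = [0,1]^d`. -/
def Q : Set (Fin d → ℝ) := Icc 0 1

/-- The canonical basis vector `e i`. -/
def ee (i : Fin d) : Fin d → ℝ := Pi.single i 1

/-- `x` belongs to the mesh `M_h`, i.e. `x ∈ Q` and `x = h • z` for some `z ∈ ℤ^d`. -/
def onMesh (h : ℝ) (x : Fin d → ℝ) : Prop :=
  x ∈ Icc (0 : Fin d → ℝ) 1 ∧ ∀ i, ∃ z : ℤ, x i = h * z

/-- `x` is an interior mesh point: `x ∈ M_h ∩ (0,1)^d`. -/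
def inMesh (h : ℝ) (x : Fin d → ℝ) : Prop :=
  onMesh d h x ∧ ∀ i, 0 < x i ∧ x i < 1

/-- First order forward finite difference `D_{h,i} u (x)`. -/
noncomputable def D1 (h : ℝ) (u : (Fin d → ℝ) → ℝ) (x : Fin d → ℝ) (i : Fin d) : ℝ :=
  (u (x + h • ee d i) - u x) / h

/-- Second order finite differences `D²_{h,ij} u (x)`. -/
noncomputable def D2 (h : ℝ) (u : (Fin d → ℝ) → ℝ) (x : Fin d → ℝ) (i j : Fin d) : ℝ :=
  if i = j then (u (x + h • ee d i) - 2 * u x + u (x - h • ee d i)) / h ^ 2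
  else
    (u (x + h • ee d i + h • ee d j) - u (x - h • ee d i + h • ee d j) -
        u (x + h • ee d i - h • ee d j) + u (x - h • ee d i - h • ee d j)) /
      (4 * h ^ 2)

/-- The discrete Hessian `H_h u (x)`. -/
noncomputable def Hd (h : ℝ) (u : (Fin d → ℝ) → ℝ) (x : Fin d → ℝ) :
    Matrix (Fin d) (Fin d) ℝ :=
  Matrix.of fun i j => D2 d h u x i j

/-- First partial derivative `∂_i u` (derivative taken within `Q`). -/
noncomputable def pd (u : (Fin d → ℝ) → ℝ) (i : Fin d) (y : Fin d → ℝ) : ℝ :=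
  fderivWithin ℝ u (Q d) y (ee d i)

end Stmt18

open Stmt18

lemma convex_step (d : ℕ) (h : ℝ) (hh : 0 < h) (uh : (Fin d → ℝ) → ℝ) (x : Fin d → ℝ)
    (i : Fin d) (hpsd : (Hd d h uh x).PosSemidef) :
    uh x - uh (x - h • ee d i) ≤ uh (x + h • ee d i) - uh x := by
  have h0 : (0:ℝ) ≤ Hd d h uh x i i := by
    exact hpsd.diag_nonneg
  have h1 : (0:ℝ) ≤ (uh (x + h • ee d i) - 2 * uh x + uh (x - h • ee d i)) / h ^ 2 := by
    simpa [Hd, D2] using h0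
  have h2 : (0:ℝ) ≤ uh (x + h • ee d i) - 2 * uh x + uh (x - h • ee d i) := by
    have := mul_nonneg h1 (le_of_lt (pow_pos hh 2))
    rwa [div_mul_cancel₀] at this
    positivity
  linarith

lemma coord_bound (d : ℕ) (x : Fin d → ℝ) (hx : x ∈ Icc (0 : Fin d → ℝ) 1)
    (ε : ℝ) (hε : ε < infDist x (frontier (Set.Icc (0 : Fin d → ℝ) 1))) (j : Fin d) :
    ε < x j ∧ ε < 1 - x j := by
  have hx0 : ∀ k, 0 ≤ x k := fun k => hx.1 k
  have hx1 : ∀ k, x k ≤ 1 := fun k => hx.2 k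
  have hint : ∀ y : Fin d → ℝ, y ∈ interior (Icc (0 : Fin d → ℝ) 1) →
      y j ∈ Ioo (0:ℝ) 1 := by
    intro y hy
    have hopen : IsOpen ((Function.eval j) '' interior (Icc (0 : Fin d → ℝ) 1)) :=
      isOpenMap_eval j _ isOpen_interior
    have hsub : (Function.eval j) '' interior (Icc (0 : Fin d → ℝ) 1) ⊆ Icc (0:ℝ) 1 := by
      rintro t ⟨w, hw, rfl⟩
      have hw' := interior_subset hw
      exact ⟨hw'.1 j, hw'.2 j⟩
    have := interior_maximal hsub hopen
    have hmem : y j ∈ interior (Icc (0:ℝ) 1) := this ⟨y, hy, rfl⟩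
    rwa [interior_Icc] at hmem
  constructor
  · set y : Fin d → ℝ := Function.update x j 0 with hy
    have hyf : y ∈ frontier (Icc (0 : Fin d → ℝ) 1) := by
      rw [frontier, closure_eq_iff_isClosed.2 isClosed_Icc]
      constructor
      · constructor
        · intro k; by_cases hk : k = j <;> simp [hy, hk, Function.update_apply, hx0 k]
        · intro k; by_cases hk : k = j <;> simp [hy, hk, Function.update_apply, hx1 k]
      · intro hmem
        have := hint y hmem
        simp [hy, Function.update_apply] at this
    have hdist : dist x y ≤ x j := by
      rw [dist_pi_le_iff (hx0 j)]
      intro k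
      by_cases hk : k = j
      · subst hk; simp [hy, Real.dist_eq, abs_of_nonneg (hx0 k)]
      · simp [hy, Function.update_apply, hk, dist_self, hx0 j]
    calc ε < infDist x _ := hε
      _ ≤ dist x y := infDist_le_dist_of_mem hyf
      _ ≤ x j := hdist
  · set y : Fin d → ℝ := Function.update x j 1 with hy
    have hyf : y ∈ frontier (Icc (0 : Fin d → ℝ) 1) := by
      rw [frontier, closure_eq_iff_isClosed.2 isClosed_Icc]
      constructor
      · constructor
        · intro k; by_cases hk : k = j <;> simp [hy, hk, Function.update_apply, hx0 k]
        · intro k; by_cases hk : k = j <;> simp [hy, hk, Function.update_apply, hx1 k]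
      · intro hmem
        have := hint y hmem
        simp [hy, Function.update_apply] at this
    have hd0 : (0:ℝ) ≤ 1 - x j := by linarith [hx1 j]
    have hdist : dist x y ≤ 1 - x j := by
      rw [dist_pi_le_iff hd0]
      intro k
      by_cases hk : k = j
      · subst hk; simp [hy, Real.dist_eq, abs_of_nonpos (by linarith [hx1 k] : x k - 1 ≤ 0)]
      · simp [hy, Function.update_apply, hk, dist_self, hd0]
    calc ε < infDist x _ := hε
      _ ≤ dist x y := infDist_le_dist_of_mem hyf
      _ ≤ 1 - x j := hdist

lemma oneD (g : ℤ → ℝ) (m : ℕ) (M₀ : ℝ) (hm : 0 < m)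
    (mono : ∀ k : ℤ, -(m:ℤ) + 1 ≤ k → k ≤ (m:ℤ) - 1 → g k - g (k-1) ≤ g (k+1) - g k)
    (hb : ∀ k : ℤ, |k| ≤ (m:ℤ) → |g k| ≤ M₀) :
    |g 1 - g 0| ≤ 2 * M₀ / m := by
  set Δ : ℝ := g 1 - g 0 with hΔ
  have step1 : ∀ k : ℕ, (k:ℤ) ≤ (m:ℤ) - 1 → Δ ≤ g (k+1) - g k := by
    intro k
    induction k with
    | zero => intro _; simp [hΔ]
    | succ k ih =>
      intro hk
      have h1 := ih (by push_cast at hk ⊢; omega)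
      have h2 := mono ((k:ℤ)+1) (by push_cast; omega) (by push_cast at hk ⊢; omega)
      have e : ((k:ℤ)+1) - 1 = (k:ℤ) := by ring
      rw [e] at h2
      have e2 : ((k+1:ℕ):ℤ) = (k:ℤ)+1 := by push_cast; ring
      rw [e2]
      linarith
  have step2 : ∀ k : ℕ, (k:ℤ) ≤ (m:ℤ) → (k:ℝ) * Δ ≤ g k - g 0 := by
    intro k
    induction k with
    | zero => intro _; simp
    | succ k ih =>
      intro hk
      have h1 := ih (by omega)
      have h2 := step1 k (by omega)
      have e2 : ((k+1:ℕ):ℤ) = (k:ℤ)+1 := by push_cast; ring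
      rw [e2]
      push_cast
      linarith
  have step3 : ∀ k : ℕ, (k:ℤ) ≤ (m:ℤ) - 1 → g (-(k:ℤ)) - g (-(k:ℤ)-1) ≤ Δ := by
    intro k
    induction k with
    | zero =>
      intro _
      have := mono 0 (by omega) (by omega)
      simpa [hΔ] using this
    | succ k ih =>
      intro hk
      have h1 := ih (by push_cast at hk ⊢; omega)
      have h2 := mono (-(k:ℤ)-1) (by push_cast at hk ⊢; omega) (by omega)
      have e2 : -(k:ℤ)-1+1 = -(k:ℤ) := by ring
      rw [e2] at h2
      have e3 : (-((k+1:ℕ)):ℤ) = -(k:ℤ)-1 := by push_cast; ring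
      rw [e3]
      linarith
  have step4 : ∀ k : ℕ, (k:ℤ) ≤ (m:ℤ) → g 0 - g (-(k:ℤ)) ≤ (k:ℝ) * Δ := by
    intro k
    induction k with
    | zero => intro _; simp
    | succ k ih =>
      intro hk
      have h1 := ih (by omega)
      have h2 := step3 k (by omega)
      have e3 : (-((k+1:ℕ)):ℤ) = -(k:ℤ)-1 := by push_cast; ring
      rw [e3]
      push_cast
      linarith
  have hbm := hb m (by simp)
  have hb0 := hb 0 (by simp)
  have hbm' := hb (-(m:ℤ)) (by simp)
  rw [abs_le] at hbm hb0 hbm'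
  have hup : (m:ℝ) * Δ ≤ 2 * M₀ := by
    have := step2 m le_rfl
    linarith
  have hdown : -(2 * M₀) ≤ (m:ℝ) * Δ := by
    have := step4 m le_rfl
    linarith
  have hmr : (0:ℝ) < m := by exact_mod_cast hm
  rw [abs_le]
  constructor
  · rw [neg_le, le_div_iff₀ hmr]
    nlinarith
  · rw [le_div_iff₀ hmr]
    nlinarith

lemma shift_coord (d : ℕ) (x : Fin d → ℝ) (a : ℝ) (i j : Fin d) :
    (x + a • ee d i) j = x j + (if j = i then a else 0) := by
  by_cases hj : j = i <;> simp [ee, Pi.single_apply, hj]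


/-- For a discrete function `u_h` on `M_h` (`h = 1/n`) with positive
semidefinite discrete Hessian at every interior mesh point and `|u_h| ≤ M₀`:
(a) along every coordinate line `u_h` satisfies the one-dimensional discrete convexity
inequalities; and (b) for every `ε > 0` there is a constant `C` depending only on `M₀`
and `ε` (not on `u_h` nor on `h`) bounding `|D_{h,i} u_h (x)|` at all mesh points at
distance more than `ε` from the boundary where the difference is defined. -/
theorem stmt_18 (d : ℕ) (hd : 0 < d) (M₀ : ℝ) (hM₀ : 0 < M₀) :
    (∀ n : ℕ, 0 < n → ∀ uh : (Fin d → ℝ) → ℝ,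
      (∀ x, inMesh d (1 / n) x → (Hd d (1 / n) uh x).PosSemidef) →
      (∀ x, onMesh d (1 / n) x → |uh x| ≤ M₀) →
      ∀ x, ∀ i : Fin d,
        onMesh d (1 / n) (x - (1 / n : ℝ) • ee d i) →
        onMesh d (1 / n) (x + (1 / n : ℝ) • ee d i) →
        inMesh d (1 / n) x →
        (uh x - uh (x - (1 / n : ℝ) • ee d i)) / (1 / n : ℝ)
          ≤ (uh (x + (1 / n : ℝ) • ee d i) - uh x) / (1 / n : ℝ)) ∧
    (∀ ε : ℝ, 0 < ε → ∃ C : ℝ,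
      ∀ n : ℕ, 0 < n → ∀ uh : (Fin d → ℝ) → ℝ,
        (∀ x, inMesh d (1 / n) x → (Hd d (1 / n) uh x).PosSemidef) →
        (∀ x, onMesh d (1 / n) x → |uh x| ≤ M₀) →
        ∀ x, ∀ i : Fin d,
          onMesh d (1 / n) x →
          onMesh d (1 / n) (x + (1 / n : ℝ) • ee d i) →
          ε < infDist x (frontier (Q d)) →
          |D1 d (1 / n) uh x i| ≤ C) := by
  constructor
  · intro n hn uh hpsd _ x i _ _ hx
    have hh : (0:ℝ) < 1 / n := by positivity
    have := convex_step d (1/n) hh uh x i (hpsd x hx)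
    gcongr
  · intro ε hε
    refine ⟨4 * M₀ / ε, ?_⟩
    intro n hn uh hpsd hbd x i hx hx' hdist
    have hh : (0:ℝ) < 1 / n := by positivity
    set h : ℝ := 1 / n with hhdef
    have hcb : ∀ j, ε < x j ∧ ε < 1 - x j := by
      intro j
      exact coord_bound d x hx.1 ε (by simpa [Q] using hdist) j
    have hnR : (0:ℝ) < n := by exact_mod_cast hn
    have hhn : h * n = 1 := by rw [hhdef]; field_simp
    set m : ℕ := ⌊ε * n⌋₊ with hm
    by_cases hm0 : m = 0
    · -- coarse bound: ε * n < 1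
      have hεn : ε * n < 1 := by
        by_contra hcon
        push_neg at hcon
        have : (1:ℕ) ≤ m := by
          rw [hm]
          exact Nat.le_floor (by exact_mod_cast hcon)
        omega
      have hb1 := hbd x hx
      have hb2 := hbd _ hx'
      rw [abs_le] at hb1 hb2
      have key : |uh (x + h • ee d i) - uh x| ≤ 2 * M₀ := by
        rw [abs_le]; constructor <;> [skip; skip] <;> cases hb1 <;> cases hb2 <;> linarith
      calc |D1 d h uh x i| = |uh (x + h • ee d i) - uh x| / h := by
            rw [D1, abs_div, abs_of_pos hh]
        _ ≤ (2 * M₀) / h := by gcongr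
        _ = 2 * M₀ * n := by rw [hhdef]; field_simp
        _ ≤ 4 * M₀ / ε := by
            rw [le_div_iff₀ hε]
            nlinarith
    · have hm1 : 0 < m := Nat.pos_of_ne_zero hm0
      have hmh : (m:ℝ) * h ≤ ε := by
        have := Nat.floor_le (by positivity : (0:ℝ) ≤ ε * n)
        rw [← hm] at this
        calc (m:ℝ) * h ≤ (ε * n) * h := by
              apply mul_le_mul_of_nonneg_right this (le_of_lt hh)
          _ = ε := by rw [mul_assoc, mul_comm (n:ℝ) h, hhn, mul_one]
      set g : ℤ → ℝ := fun k => uh (x + ((k:ℝ) * h) • ee d i) with hg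
      have ptmem : ∀ k : ℤ, |k| ≤ (m:ℤ) → inMesh d h (x + ((k:ℝ) * h) • ee d i) := by
        intro k hk
        have hkr : |(k:ℝ)| * h ≤ (m:ℝ) * h := by
          apply mul_le_mul_of_nonneg_right _ (le_of_lt hh)
          exact_mod_cast hk
        have habs : |(k:ℝ) * h| ≤ ε := by
          rw [abs_mul, abs_of_pos hh]; exact le_trans hkr hmh
        rw [abs_le] at habs
        have hlt : ∀ j, 0 < (x + ((k:ℝ) * h) • ee d i) j ∧ (x + ((k:ℝ) * h) • ee d i) j < 1 := by
          intro j
          rw [shift_coord]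
          rcases hcb j with ⟨c1, c2⟩
          by_cases hj : j = i
          · subst hj
            constructor <;> · simp only [if_pos rfl, eq_self_iff_true, if_true]; linarith [habs.1, habs.2]
          · simp only [if_neg hj, add_zero]
            exact ⟨by linarith, by linarith⟩
        refine ⟨⟨⟨?_, ?_⟩, ?_⟩, hlt⟩
        · intro j
          exact le_of_lt (hlt j).1
        · intro j
          exact le_of_lt (hlt j).2
        · intro j
          rw [shift_coord]
          by_cases hj : j = i
          · obtain ⟨z, hz⟩ := hx.2 i
            subst hj
            refine ⟨z + k, ?_⟩
            simp only [if_true, hz]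
            push_cast
            ring
          · obtain ⟨z, hz⟩ := hx.2 j
            exact ⟨z, by simp [hj, hz]⟩
      have mono : ∀ k : ℤ, -(m:ℤ) + 1 ≤ k → k ≤ (m:ℤ) - 1 →
          g k - g (k-1) ≤ g (k+1) - g k := by
        intro k hk1 hk2
        have hint := ptmem k (by rw [abs_le]; omega)
        have hcs := convex_step d h hh uh _ i (hpsd _ hint)
        have s1 : ((k:ℝ)) * h + h = (((k+1:ℤ)):ℝ) * h := by push_cast; ring
        have s2 : ((k:ℝ)) * h - h = (((k-1:ℤ)):ℝ) * h := by push_cast; ring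
        have e1 : x + ((k:ℝ) * h) • ee d i + h • ee d i
            = x + ((((k+1:ℤ)):ℝ) * h) • ee d i := by
          rw [add_assoc, ← add_smul, s1]
        have e2 : x + ((k:ℝ) * h) • ee d i - h • ee d i
            = x + ((((k-1:ℤ)):ℝ) * h) • ee d i := by
          rw [add_sub_assoc, ← sub_smul, s2]
        rw [e1, e2] at hcs
        simpa [hg] using hcs
      have hbound : ∀ k : ℤ, |k| ≤ (m:ℤ) → |g k| ≤ M₀ := by
        intro k hk
        exact hbd _ (ptmem k hk).1
      have hone := oneD g m M₀ hm1 mono hbound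
      have e1 : g 1 = uh (x + h • ee d i) := by norm_num [hg]
      have e0 : g 0 = uh x := by norm_num [hg]
      rw [e1, e0] at hone
      have hfl : ε * n < (m:ℝ) + 1 := by
        rw [hm]
        push_cast
        exact Nat.lt_floor_add_one (ε * n)
      have hmR : (0:ℝ) < m := by exact_mod_cast hm1
      calc |D1 d h uh x i| = |uh (x + h • ee d i) - uh x| / h := by
            rw [D1, abs_div, abs_of_pos hh]
        _ ≤ (2 * M₀ / m) / h := by gcongr
        _ = 2 * M₀ * n / m := by rw [hhdef]; field_simp
        _ ≤ 4 * M₀ / ε := by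
            rw [div_le_div_iff₀ hmR hε]
            have hm1' : (1:ℝ) ≤ m := by exact_mod_cast hm1
            nlinarith [mul_lt_mul_of_pos_left hfl hM₀, hm1', hM₀]
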